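/- Coercivity from cocompactness: Let $(X, F, D)$ be a dislocation space (in particular $F$ is even, convex, continuous, $F^{-1}(0)=\{0\}$, weakly lower semicontinuous, $D$-invariant, and $X$ reflexive), let $X$ be cocompactly embedded into a Banach space $Y$ relative to $D$, and let $G : Y \to [0,\infty)$ be continuous on $Y$ with $G(0) = 0$. Then for all $a, b > 0$, $\inf\{F(u) : u \in X, G(au) > b\} > 0$. -/

import Mathlib

open Filter Topology

/-- Weak convergence of a sequence to `0` in a normed space. -/
def WeakNull {X : Type*} [NormedAddCommGroup X] [NormedSpace ℝ X]
    (u : ℕ → X) : Prop :=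
  ∀ φ : X →L[ℝ] ℝ, Tendsto (fun k => φ (u k)) atTop (𝓝 0)

/-- Weak convergence of a sequence in a normed space. -/
def WeakConv {X : Type*} [NormedAddCommGroup X] [NormedSpace ℝ X]
    (u : ℕ → X) (w : X) : Prop :=
  ∀ φ : X →L[ℝ] ℝ, Tendsto (fun k => φ (u k)) atTop (𝓝 (φ w))

/-- coercivity from cocompactness. In a dislocation space
`(X, F, D)` cocompactly embedded into `Y`, for continuous `G : Y → [0,∞)` with
`G(0) = 0` one has `inf {F(u) : G(au) > b} > 0` for all `a, b > 0`. -/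
theorem coercivity_from_cocompactness {X Y : Type*}
    [NormedAddCommGroup X] [NormedSpace ℝ X] [CompleteSpace X]
    [TopologicalSpace.SeparableSpace X]
    [NormedAddCommGroup Y] [NormedSpace ℝ Y] [CompleteSpace Y]
    (ι : X →L[ℝ] Y) (hinj : Function.Injective ι)
    (F : X → ℝ)
    (hF_nonneg : ∀ u, 0 ≤ F u)
    (hF_even : ∀ u, F (-u) = F u)
    (hF_convex : ConvexOn ℝ Set.univ F)
    (hF_zero : ∀ u, F u = 0 ↔ u = 0)
    (hF_cont : Continuous F)
    (hF_wlsc : ∀ (u : ℕ → X) (w : X), WeakConv u w →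
      F w ≤ Filter.liminf (fun k => F (u k)) atTop)
    (hgauge : ∀ u : X, F u ≤ 1 → ‖u‖ ≤ 1)
    -- reflexivity: bounded sequences have weakly convergent subsequences
    (hrefl : ∀ u : ℕ → X, (∃ C : ℝ, ∀ k, ‖u k‖ ≤ C) →
      ∃ (ψ : ℕ → ℕ) (w : X), StrictMono ψ ∧ WeakConv (fun k => u (ψ k)) w)
    (D : Subgroup (X ≃ₗᵢ[ℝ] X))
    (hD_F : ∀ g ∈ D, ∀ u : X, F (g u) = F u)
    -- cocompactness of the embedding relative to `D`
    (hcocompact : ∀ u : ℕ → X,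
      (∀ g : ℕ → X ≃ₗᵢ[ℝ] X, (∀ k, g k ∈ D) → WeakNull (fun k => g k (u k))) →
      Tendsto (fun k => ‖ι (u k)‖) atTop (𝓝 0))
    (G : Y → ℝ)
    (hG_nonneg : ∀ v, 0 ≤ G v) (hG_cont : Continuous G) (hG_zero : G 0 = 0) :
    ∀ a b : ℝ, 0 < a → 0 < b →
      ∃ ε : ℝ, 0 < ε ∧ ∀ u : X, b < G (ι (a • u)) → ε ≤ F u := by
  intro a b ha hb
  by_contra hcon
  push_neg at hcon
  -- build a sequence u with F (u k) < 1/(k+1) and b < G (ι (a • u k))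
  have hseq : ∀ k : ℕ, ∃ u : X, b < G (ι (a • u)) ∧ F u < 1 / (k + 1) := by
    intro k
    have hpos : (0:ℝ) < 1 / (k + 1) := by positivity
    obtain ⟨u, hu1, hu2⟩ := hcon (1 / (k + 1)) hpos
    exact ⟨u, hu1, hu2⟩
  choose u hub huF using hseq
  -- F (u k) → 0
  have hFu0 : Tendsto (fun k => F (u k)) atTop (𝓝 0) := by
    have h1 : Tendsto (fun k : ℕ => 1 / ((k : ℝ) + 1)) atTop (𝓝 0) :=
      tendsto_one_div_add_atTop_nhds_zero_nat
    refine squeeze_zero (fun k => hF_nonneg (u k)) (fun k => (huF k).le) h1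
  have hFle1 : ∀ k, F (u k) ≤ 1 := by
    intro k
    calc F (u k) ≤ 1 / (k + 1) := (huF k).le
    _ ≤ 1 := by
        rw [div_le_one (by positivity)]
        linarith [Nat.cast_nonneg (α := ℝ) k]
  have hnorm1 : ∀ k, ‖u k‖ ≤ 1 := fun k => hgauge _ (hFle1 k)
  -- key: D-weak nullness
  have hwn : ∀ g : ℕ → X ≃ₗᵢ[ℝ] X, (∀ k, g k ∈ D) →
      WeakNull (fun k => g k (u k)) := by
    intro g hg φ
    apply tendsto_of_subseq_tendsto
    intro ns hns
    have hbdd : ∃ C : ℝ, ∀ k, ‖g (ns k) (u (ns k))‖ ≤ C := by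
      refine ⟨1, fun k => ?_⟩
      rw [(g (ns k)).norm_map]
      exact hnorm1 _
    obtain ⟨ψ, w, hψ, hwc⟩ := hrefl (fun k => g (ns k) (u (ns k))) hbdd
    refine ⟨ψ, ?_⟩
    -- show w = 0 using wlsc
    have hFg : ∀ k, F (g (ns (ψ k)) (u (ns (ψ k)))) = F (u (ns (ψ k))) :=
      fun k => hD_F _ (hg _) _
    have htend : Tendsto (fun k => F (g (ns (ψ k)) (u (ns (ψ k))))) atTop (𝓝 0) := by
      simp only [hFg]
      exact hFu0.comp (hns.comp hψ.tendsto_atTop)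
    have hliminf : Filter.liminf
        (fun k => F (g (ns (ψ k)) (u (ns (ψ k))))) atTop = 0 :=
      htend.liminf_eq
    have hFw : F w ≤ 0 := by
      have := hF_wlsc (fun k => g (ns (ψ k)) (u (ns (ψ k)))) w hwc
      rwa [hliminf] at this
    have hw0 : w = 0 := (hF_zero w).mp (le_antisymm hFw (hF_nonneg w))
    have := hwc φ
    rw [hw0, map_zero] at this
    exact this
  -- cocompactness gives ι (u k) → 0
  have hnull : Tendsto (fun k => ‖ι (u k)‖) atTop (𝓝 0) := hcocompact u hwn
  have hι0 : Tendsto (fun k => ι (u k)) atTop (𝓝 0) := by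
    rwa [← tendsto_zero_iff_norm_tendsto_zero] at hnull
  have haι0 : Tendsto (fun k => ι (a • u k)) atTop (𝓝 0) := by
    have := hι0.const_smul a
    simpa [map_smul] using this
  have hG0 : Tendsto (fun k => G (ι (a • u k))) atTop (𝓝 0) := by
    have := hG_cont.continuousAt.tendsto.comp haι0
    simpa [hG_zero, Function.comp_def] using this
  have : ∀ᶠ k in atTop, G (ι (a • u k)) < b :=
    hG0.eventually_lt_const hb
  obtain ⟨k, hk⟩ := this.exists
  exact absurd (hub k) (not_lt.mpr hk.le)
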